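/- Let m_1, …, m_N be real polynomials with nonzero leading coefficients d_1, …, d_N, let l_1, …, l_N be nonzero real numbers, define b_0 = 1/d_1, a_0(z) = (z m_1(z) − 1/l_1)/d_1 and, for 1 ≤ j ≤ N−1, b_j = 1/(l_j² d_j d_{j+1}), a_j(z) = (z m_{j+1}(z) − (1/l_j + 1/l_{j+1}))/d_{j+1}, and let P_{n_j} be the polynomials of the first kind for these parameters. Then for j = 1, …, N−1: (1) P_{n_j}(0) = (−1)^j ∏_{i=1}^j 1/(d_i l_i); (2) P_{n_j}(0)² = d_{j+1} ∏_{i=0}^j b_i; (3) P_{n_{j−1}}(0)·P_{n_j}(0) = −(1/l_j) ∏_{i=0}^{j−1} b_i. -/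
import Mathlib


open Polynomial Finset

noncomputable section

/-- Lemma 5.3 (values of the polynomials of the first kind at 0).
Indices are shifted by one: `P (j+1) = P_{n_j}`. -/
theorem first_kind_polynomials_at_zero
    (N : ℕ) (hN : 1 ≤ N) (m : ℕ → Polynomial ℝ) (l : ℕ → ℝ) (d : ℕ → ℝ)
    (hd : ∀ j, 1 ≤ j → j ≤ N → d j = (m j).leadingCoeff)
    (hd0 : ∀ j, 1 ≤ j → j ≤ N → d j ≠ 0)
    (hl0 : ∀ j, 1 ≤ j → j ≤ N → l j ≠ 0)
    (b : ℕ → ℝ) (a : ℕ → Polynomial ℝ)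
    (hb0 : b 0 = (d 1)⁻¹)
    (ha0 : a 0 = Polynomial.C (d 1)⁻¹ * (Polynomial.X * m 1 - Polynomial.C (l 1)⁻¹))
    (hb : ∀ j, 1 ≤ j → j ≤ N - 1 → b j = ((l j) ^ 2 * d j * d (j + 1))⁻¹)
    (ha : ∀ j, 1 ≤ j → j ≤ N - 1 → a j =
      Polynomial.C (d (j + 1))⁻¹ *
        (Polynomial.X * m (j + 1) - Polynomial.C ((l j)⁻¹ + (l (j + 1))⁻¹)))
    (P : ℕ → Polynomial ℝ)
    (hP0 : P 0 = 0) (hP1 : P 1 = 1)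
    (hPrec : ∀ j, j ≤ N - 1 → P (j + 2) = a j * P (j + 1) - Polynomial.C (b j) * P j) :
    ∀ j, 1 ≤ j → j ≤ N - 1 →
      (P (j + 1)).eval 0 = (-1 : ℝ) ^ j * ∏ i ∈ Finset.Icc 1 j, (d i * l i)⁻¹ ∧
      ((P (j + 1)).eval 0) ^ 2 = d (j + 1) * ∏ i ∈ Finset.range (j + 1), b i ∧
      (P j).eval 0 * (P (j + 1)).eval 0 = -(l j)⁻¹ * ∏ i ∈ Finset.range j, b i := by
  have key : ∀ j, j ≤ N - 1 →
      (P (j + 1)).eval 0 = (-1 : ℝ) ^ j * ∏ i ∈ Finset.Icc 1 j, (d i * l i)⁻¹ := by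
    intro j
    induction j using Nat.strong_induction_on with
    | _ j ih =>
      match j with
      | 0 => intro _; simp [hP1]
      | 1 =>
        intro h1
        rw [hPrec 0 (by omega), ha0]
        simp [hP0, hP1, mul_inv]
        ring
      | (k+2) =>
        intro hle
        rw [hPrec (k+1) (by omega), ha (k+1) (by omega) (by omega),
          hb (k+1) (by omega) (by omega)]
        simp only [eval_sub, eval_mul, eval_C, eval_X, zero_mul, zero_sub, eval_neg]
        rw [ih (k+1) (by omega) (by omega), ih k (by omega) (by omega),
          Finset.prod_Icc_succ_top (by omega : 1 ≤ k + 1 + 1),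
          Finset.prod_Icc_succ_top (by omega : 1 ≤ k + 1)]
        simp only [mul_inv]
        ring
  have prodb : ∀ j, j ≤ N - 1 →
      ∏ i ∈ Finset.range (j + 1), b i =
        (d (j + 1))⁻¹ * ∏ i ∈ Finset.Icc 1 j, ((d i * l i)⁻¹) ^ 2 := by
    intro j
    induction j with
    | zero => intro _; simp [hb0]
    | succ k ih =>
      intro hle
      rw [Finset.prod_range_succ, ih (by omega), hb (k+1) (by omega) (by omega),
        Finset.prod_Icc_succ_top (by omega : 1 ≤ k + 1)]
      simp only [mul_inv]
      ring
  intro j h1 h2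
  obtain ⟨k, rfl⟩ : ∃ k, j = k + 1 := ⟨j - 1, by omega⟩
  have hk1 := key (k+1) h2
  have hk0 := key k (by omega)
  have hpb := prodb (k+1) h2
  have hpb0 := prodb k (by omega)
  refine ⟨hk1, ?_, ?_⟩
  · rw [hk1, hpb, mul_pow, ← Finset.prod_pow]
    have : ((-1 : ℝ) ^ (k+1)) ^ 2 = 1 := by
      rw [← pow_mul, pow_mul']; norm_num
    rw [this, one_mul, ← mul_assoc, mul_inv_cancel₀ (hd0 (k+2) (by omega) (by omega)),
      one_mul]
  · rw [hk1, hk0, hpb0, Finset.prod_Icc_succ_top (by omega : 1 ≤ k + 1),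
      Finset.prod_pow]
    have hm : ((-1 : ℝ)) ^ k * (-1) ^ k = 1 := by
      rw [← pow_add, ← two_mul, pow_mul]; norm_num
    set A := ∏ i ∈ Finset.Icc 1 k, (d i * l i)⁻¹ with hA
    rw [pow_succ, mul_inv]
    linear_combination (-((d (k+1))⁻¹ * (l (k+1))⁻¹ * A ^ 2)) * hm

end
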